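/- Assume b = A x̄ + z, and let δ' ∈ (0,1), γ > (1+δ')/(1−δ'), and λ > 0 satisfy λ ≥ max{4, (γ+1)/((1−δ')γ − (1+δ'))} · ‖Aᵀz‖_∞. Let s̃ ≥ 1 be an integer with ρ₋(A, s̄+s̃) > 0. If x ∈ ℝⁿ satisfies ‖x_{S̄ᶜ}‖₀ ≤ s̃ and there exists ξ ∈ ∂‖x‖₁ with ‖Aᵀ(Ax − b) + λξ‖_∞ ≤ δ'λ, then: (i) ‖(x − x̄)_{S̄ᶜ}‖₁ ≤ γ ‖(x − x̄)_{S̄}‖₁; (ii) ‖x − x̄‖₂ ≤ 2λ√s̄ / ρ₋(A, s̄+s̃); and (iii) φ_λ(x) ≤ φ_λ(x̄) + 2δ'(1+γ)λ² s̄ / ρ₋(A, s̄+s̃). -/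

import Mathlib

open scoped BigOperators
open Matrix

noncomputable section

namespace PGH

/-- Euclidean dot product on `Fin n → ℝ`. -/
def dot {n : ℕ} (x y : Fin n → ℝ) : ℝ := ∑ i, x i * y i

/-- Squared Euclidean norm. -/
def sqnorm {n : ℕ} (x : Fin n → ℝ) : ℝ := ∑ i, (x i) ^ 2

/-- Euclidean (ℓ₂) norm. -/
noncomputable def l2 {n : ℕ} (x : Fin n → ℝ) : ℝ := Real.sqrt (sqnorm x)

/-- ℓ₁ norm. -/
def l1 {n : ℕ} (x : Fin n → ℝ) : ℝ := ∑ i, |x i|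

/-- ℓ∞ norm (maximum absolute coordinate). -/
noncomputable def linf {n : ℕ} (x : Fin n → ℝ) : ℝ := ⨆ i, |x i|

/-- Support of a vector. -/
def supp {n : ℕ} (x : Fin n → ℝ) : Finset (Fin n) := Finset.univ.filter (fun i => x i ≠ 0)

/-- Number of nonzero coordinates. -/
def l0 {n : ℕ} (x : Fin n → ℝ) : ℕ := (supp x).card

/-- Number of nonzero coordinates within the index set `S`
(i.e. `‖x_S‖₀` for the restriction of `x` to `S`). -/
def l0on {n : ℕ} (S : Finset (Fin n)) (x : Fin n → ℝ) : ℕ :=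
  (S.filter (fun i => x i ≠ 0)).card

/-- ℓ₁ norm of the restriction of `x` to the index set `S`. -/
def l1on {n : ℕ} (S : Finset (Fin n)) (x : Fin n → ℝ) : ℝ := ∑ i ∈ S, |x i|

/-- Gradient of `f(x) = (1/2)‖Ax - b‖₂²`, namely `Aᵀ(Ax - b)`. -/
def grad {m n : ℕ} (A : Matrix (Fin m) (Fin n) ℝ) (b : Fin m → ℝ) (x : Fin n → ℝ) :
    Fin n → ℝ :=
  Aᵀ.mulVec (A.mulVec x - b)

/-- Least-squares objective `f(x) = (1/2)‖Ax - b‖₂²`. -/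
def fls {m n : ℕ} (A : Matrix (Fin m) (Fin n) ℝ) (b : Fin m → ℝ) (x : Fin n → ℝ) : ℝ :=
  sqnorm (A.mulVec x - b) / 2

/-- ℓ₁-regularized least-squares objective `φ_λ(x) = f(x) + λ‖x‖₁`. -/
def phi {m n : ℕ} (A : Matrix (Fin m) (Fin n) ℝ) (b : Fin m → ℝ) (lam : ℝ)
    (x : Fin n → ℝ) : ℝ :=
  fls A b x + lam * l1 x

/-- Restricted maximal eigenvalue `ρ₊(A, s)`. -/
noncomputable def rhoPlus {m n : ℕ} (A : Matrix (Fin m) (Fin n) ℝ) (s : ℕ) : ℝ :=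
  sSup {r | ∃ x : Fin n → ℝ, x ≠ 0 ∧ l0 x ≤ s ∧ r = sqnorm (A.mulVec x) / sqnorm x}

/-- Restricted minimal eigenvalue `ρ₋(A, s)`. -/
noncomputable def rhoMinus {m n : ℕ} (A : Matrix (Fin m) (Fin n) ℝ) (s : ℕ) : ℝ :=
  sInf {r | ∃ x : Fin n → ℝ, x ≠ 0 ∧ l0 x ≤ s ∧ r = sqnorm (A.mulVec x) / sqnorm x}

/-- `ξ` is a subgradient of the ℓ₁ norm at `x`. -/
def IsSubgrad {n : ℕ} (x ξ : Fin n → ℝ) : Prop :=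
  ∀ i, (x i ≠ 0 → ξ i = Real.sign (x i)) ∧ (x i = 0 → |ξ i| ≤ 1)

/-- Optimality residue `ω_λ(x) = min_{ξ ∈ ∂‖x‖₁} ‖Aᵀ(Ax−b) + λξ‖_∞`. -/
noncomputable def omega {m n : ℕ} (A : Matrix (Fin m) (Fin n) ℝ) (b : Fin m → ℝ)
    (lam : ℝ) (x : Fin n → ℝ) : ℝ :=
  sInf {r | ∃ ξ : Fin n → ℝ, IsSubgrad x ξ ∧
    r = linf (fun i => grad A b x i + lam * ξ i)}

/-- The local model `ψ_{λ,L}(y; x)`. -/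
def psi {m n : ℕ} (A : Matrix (Fin m) (Fin n) ℝ) (b : Fin m → ℝ) (lam L : ℝ)
    (y x : Fin n → ℝ) : ℝ :=
  fls A b y + dot (grad A b y) (x - y) + L / 2 * sqnorm (x - y) + lam * l1 x

/-- The noise-domination condition
`λ ≥ max{4, (γ+1)/((1−δ')γ−(1+δ'))} ⬝ ‖Aᵀz‖_∞`. -/
def noiseCond {m n : ℕ} (A : Matrix (Fin m) (Fin n) ℝ) (z : Fin m → ℝ)
    (dp gam lam : ℝ) : Prop :=
  lam ≥ max 4 ((gam + 1) / ((1 - dp) * gam - (1 + dp))) * linf (Aᵀ.mulVec z)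


lemma dot_transpose {m n : ℕ} (A : Matrix (Fin m) (Fin n) ℝ) (w : Fin m → ℝ)
    (h : Fin n → ℝ) : dot (Aᵀ.mulVec w) h = dot w (A.mulVec h) := by
  simp only [dot, Matrix.mulVec, dotProduct, Matrix.transpose_apply,
    Finset.sum_mul, Finset.mul_sum]
  rw [Finset.sum_comm]
  exact Finset.sum_congr rfl fun i _ => Finset.sum_congr rfl fun j _ => by ring

lemma dot_sub_left {n : ℕ} (u w v : Fin n → ℝ) :
    dot (u - w) v = dot u v - dot w v := by
  simp [dot, sub_mul, Finset.sum_sub_distrib]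

lemma dot_self_eq {n : ℕ} (u : Fin n → ℝ) : dot u u = sqnorm u := by
  simp [dot, sqnorm, sq]

lemma sqnorm_nonneg' {n : ℕ} (u : Fin n → ℝ) : 0 ≤ sqnorm u :=
  Finset.sum_nonneg fun _ _ => sq_nonneg _

lemma sqnorm_sub' {n : ℕ} (u w : Fin n → ℝ) :
    sqnorm (u - w) = sqnorm u - 2 * dot u w + sqnorm w := by
  simp only [sqnorm, dot, Pi.sub_apply, Finset.mul_sum, ← Finset.sum_add_distrib,
    ← Finset.sum_sub_distrib]
  exact Finset.sum_congr rfl fun i _ => by ring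

lemma dot_le_of_abs_le {n : ℕ} {v h : Fin n → ℝ} {M : ℝ}
    (hv : ∀ i, |v i| ≤ M) : dot v h ≤ M * l1 h := by
  unfold dot l1
  rw [Finset.mul_sum]
  refine Finset.sum_le_sum fun i _ => ?_
  calc v i * h i ≤ |v i * h i| := le_abs_self _
    _ = |v i| * |h i| := abs_mul _ _
    _ ≤ M * |h i| := mul_le_mul_of_nonneg_right (hv i) (abs_nonneg _)

lemma abs_le_linf {n : ℕ} (v : Fin n → ℝ) (i : Fin n) : |v i| ≤ linf v := by
  unfold linf
  exact le_ciSup (Set.Finite.bddAbove (Set.finite_range fun j => |v j|)) i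

lemma mul_sign_self (a : ℝ) : a * Real.sign a = |a| := by
  rcases lt_trichotomy a 0 with h | h | h
  · rw [Real.sign_of_neg h, abs_of_neg h]; ring
  · simp [h]
  · rw [Real.sign_of_pos h, abs_of_pos h]; ring

lemma abs_sign_le_one (a : ℝ) : |Real.sign a| ≤ 1 := by
  rcases lt_trichotomy a 0 with h | h | h
  · rw [Real.sign_of_neg h]; norm_num
  · simp [h]
  · rw [Real.sign_of_pos h]; norm_num

set_option maxHeartbeats 1000000 in
theorem stmt3 {m n : ℕ} (A : Matrix (Fin m) (Fin n) ℝ) (b : Fin m → ℝ)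
    (xbar : Fin n → ℝ) (z : Fin m → ℝ) (hb : b = A.mulVec xbar + z)
    (dp gam lam : ℝ) (hdp0 : 0 < dp) (hdp1 : dp < 1)
    (hgam : gam > (1 + dp) / (1 - dp))
    (hlam : 0 < lam) (hnoise : noiseCond A z dp gam lam)
    (st : ℕ) (hst : 1 ≤ st)
    (hrho : 0 < rhoMinus A ((supp xbar).card + st))
    (x : Fin n → ℝ) (hxsp : l0on (supp xbar)ᶜ x ≤ st)
    (hkkt : ∃ ξ : Fin n → ℝ, IsSubgrad x ξ ∧
      linf (fun i => grad A b x i + lam * ξ i) ≤ dp * lam) :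
    l1on (supp xbar)ᶜ (x - xbar) ≤ gam * l1on (supp xbar) (x - xbar) ∧
    l2 (x - xbar) ≤ 2 * lam * Real.sqrt ((supp xbar).card : ℝ) /
      rhoMinus A ((supp xbar).card + st) ∧
    phi A b lam x ≤ phi A b lam xbar +
      2 * dp * (1 + gam) * lam ^ 2 * ((supp xbar).card : ℝ) /
        rhoMinus A ((supp xbar).card + st) := by
  obtain ⟨ξ, hξ, hres⟩ := hkkt
  set S := supp xbar with hS
  set h := x - xbar with hh
  set eps := linf (Aᵀ.mulVec z) with heps
  set rho := rhoMinus A (S.card + st) with hrhodef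
  -- scalar preliminaries
  have hdp1' : (0:ℝ) < 1 - dp := by linarith
  have hgam0 : 0 < gam := lt_trans (div_pos (by linarith) hdp1') hgam
  have hd : 0 < (1 - dp) * gam - (1 + dp) := by
    have := (div_lt_iff₀ hdp1').mp hgam
    nlinarith
  have heps0 : 0 ≤ eps := Real.iSup_nonneg fun i => abs_nonneg _
  have hceps : eps * (gam + 1) ≤ lam * ((1 - dp) * gam - (1 + dp)) := by
    have hc : (gam + 1) / ((1 - dp) * gam - (1 + dp)) * eps ≤ lam :=
      le_trans (mul_le_mul_of_nonneg_right (le_max_right _ _) heps0) hnoise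
    rw [div_mul_eq_mul_div, div_le_iff₀ hd] at hc
    linarith
  have hepslt : eps < lam * (1 - dp) := by nlinarith [hceps, mul_pos hlam hgam0]
  -- coordinatewise bounds
  have hv : ∀ i, |grad A b x i + lam * ξ i| ≤ dp * lam := fun i =>
    le_trans (abs_le_linf (fun j => grad A b x j + lam * ξ j) i) hres
  have hz : ∀ i, |Aᵀ.mulVec z i| ≤ eps := fun i => abs_le_linf _ i
  have hxi1 : ∀ i, |ξ i| ≤ 1 := by
    intro i
    by_cases hxi : x i = 0
    · exact (hξ i).2 hxi
    · rw [(hξ i).1 hxi]; exact abs_sign_le_one _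
  -- linear algebra identities
  have hAxb : A.mulVec x - b = A.mulVec h - z := by
    rw [hb, hh, Matrix.mulVec_sub]; abel
  have hgdot : dot (grad A b x) h = sqnorm (A.mulVec h) - dot (Aᵀ.mulVec z) h := by
    rw [grad, hAxb, Matrix.mulVec_sub, dot_sub_left, dot_transpose, dot_self_eq]
  have hdotv : dot (fun i => grad A b x i + lam * ξ i) h
      = dot (grad A b x) h + lam * dot ξ h := by
    simp only [dot, add_mul, Finset.sum_add_distrib, Finset.mul_sum, mul_assoc]
  -- subgradient dot bounds
  have hScmem : ∀ i, i ∈ Sᶜ → xbar i = 0 := by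
    intro i hi
    have := Finset.mem_compl.mp hi
    simpa [hS, supp] using this
  have hxix : ∀ i, ξ i * x i = |x i| := by
    intro i
    by_cases hxi : x i = 0
    · simp [hxi]
    · rw [(hξ i).1 hxi, mul_comm, mul_sign_self]
  have hxidot : l1on Sᶜ h - l1on S h ≤ dot ξ h := by
    have hsplit : ∑ i ∈ S, ξ i * h i + ∑ i ∈ Sᶜ, ξ i * h i = dot ξ h :=
      Finset.sum_add_sum_compl S _
    have h1 : ∑ i ∈ Sᶜ, ξ i * h i = l1on Sᶜ h := by
      refine Finset.sum_congr rfl fun i hi => ?_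
      have hx0 : xbar i = 0 := hScmem i hi
      have hhi : h i = x i := by simp [hh, hx0]
      rw [hhi, hxix i]
    have h2 : -l1on S h ≤ ∑ i ∈ S, ξ i * h i := by
      rw [l1on, ← Finset.sum_neg_distrib]
      refine Finset.sum_le_sum fun i _ => ?_
      calc -|h i| ≤ -|ξ i * h i| := by
            refine neg_le_neg ?_
            rw [abs_mul]
            exact mul_le_of_le_one_left (abs_nonneg _) (hxi1 i)
        _ ≤ ξ i * h i := neg_abs_le _
    linarith
  -- abbreviations
  have hA1nn : 0 ≤ l1on S h := Finset.sum_nonneg fun _ _ => abs_nonneg _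
  have hBnn : 0 ≤ l1on Sᶜ h := Finset.sum_nonneg fun _ _ => abs_nonneg _
  have hl1split : l1 h = l1on S h + l1on Sᶜ h := by
    rw [l1, l1on, l1on, Finset.sum_add_sum_compl]
  -- master inequality
  have hTb : dot (fun i => grad A b x i + lam * ξ i) h ≤ dp * lam * l1 h :=
    dot_le_of_abs_le hv
  have hZb : dot (Aᵀ.mulVec z) h ≤ eps * l1 h := dot_le_of_abs_le hz
  have hmul := mul_le_mul_of_nonneg_left hxidot hlam.le
  rw [hl1split] at hTb hZb
  have hkey : sqnorm (A.mulVec h) + lam * (l1on Sᶜ h - l1on S h)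
      ≤ dp * lam * (l1on S h + l1on Sᶜ h) + eps * (l1on S h + l1on Sᶜ h) := by
    linarith
  have hsqAnn := sqnorm_nonneg' (A.mulVec h)
  -- Part (i)
  have hPpos : 0 < (1 - dp) * lam - eps := by nlinarith [hepslt]
  have hQP : (1 + dp) * lam + eps ≤ gam * ((1 - dp) * lam - eps) := by linarith [hceps]
  have hkey' : ((1 - dp) * lam - eps) * l1on Sᶜ h
      ≤ ((1 + dp) * lam + eps) * l1on S h := by linarith [hkey, hsqAnn]
  have hi1 : l1on Sᶜ h ≤ gam * l1on S h := by
    have hQA := mul_le_mul_of_nonneg_right hQP hA1nn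
    have : ((1 - dp) * lam - eps) * l1on Sᶜ h
        ≤ ((1 - dp) * lam - eps) * (gam * l1on S h) := by linarith [hkey', hQA]
    exact le_of_mul_le_mul_left this hPpos
  -- Part (ii)
  have hQ2 : (1 + dp) * lam + eps ≤ 2 * lam := by linarith
  have hsqA : sqnorm (A.mulVec h) ≤ 2 * lam * l1on S h := by
    linarith [hkey, mul_nonneg hPpos.le hBnn, mul_le_mul_of_nonneg_right hQ2 hA1nn]
  have hcs : l1on S h ≤ Real.sqrt (S.card : ℝ) * l2 h := by
    have h1 : (l1on S h) ^ 2 ≤ (S.card : ℝ) * sqnorm h := by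
      calc (l1on S h) ^ 2 ≤ (S.card : ℝ) * ∑ i ∈ S, |h i| ^ 2 :=
            sq_sum_le_card_mul_sum_sq
        _ ≤ (S.card : ℝ) * sqnorm h := by
            refine mul_le_mul_of_nonneg_left ?_ (Nat.cast_nonneg _)
            rw [sqnorm]
            simp only [sq_abs]
            exact Finset.sum_le_sum_of_subset_of_nonneg (Finset.subset_univ S)
              fun i _ _ => sq_nonneg _
    calc l1on S h = Real.sqrt ((l1on S h) ^ 2) := (Real.sqrt_sq hA1nn).symm
      _ ≤ Real.sqrt ((S.card : ℝ) * sqnorm h) := Real.sqrt_le_sqrt h1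
      _ = Real.sqrt (S.card : ℝ) * l2 h := by
          rw [Real.sqrt_mul (Nat.cast_nonneg _)]; rfl
  have hl0h : l0 h ≤ S.card + st := by
    rw [l0]
    calc (supp h).card ≤ (S ∪ Sᶜ.filter fun i => x i ≠ 0).card := by
          apply Finset.card_le_card
          intro i hi
          rw [Finset.mem_union]
          by_cases hiS : i ∈ S
          · exact Or.inl hiS
          · refine Or.inr (Finset.mem_filter.mpr ⟨Finset.mem_compl.mpr hiS, ?_⟩)
            have hx0 : xbar i = 0 := hScmem i (Finset.mem_compl.mpr hiS)
            have hne : h i ≠ 0 := by simpa [supp] using hi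
            simpa [hh, hx0] using hne
      _ ≤ S.card + (Sᶜ.filter fun i => x i ≠ 0).card := Finset.card_union_le _ _
      _ ≤ S.card + st := Nat.add_le_add_left hxsp _
  have hl2b : l2 h ≤ 2 * lam * Real.sqrt (S.card : ℝ) / rho := by
    by_cases hh0 : h = 0
    · rw [hh0]
      have : l2 (0 : Fin n → ℝ) = 0 := by simp [l2, sqnorm]
      rw [this]
      positivity
    · have hmem : sqnorm (A.mulVec h) / sqnorm h ∈
          {r | ∃ y : Fin n → ℝ, y ≠ 0 ∧ l0 y ≤ S.card + st ∧
            r = sqnorm (A.mulVec y) / sqnorm y} := ⟨h, hh0, hl0h, rfl⟩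
      have hbdd : BddBelow {r | ∃ y : Fin n → ℝ, y ≠ 0 ∧ l0 y ≤ S.card + st ∧
          r = sqnorm (A.mulVec y) / sqnorm y} := by
        refine ⟨0, ?_⟩
        rintro r ⟨y, -, -, rfl⟩
        exact div_nonneg (sqnorm_nonneg' _) (sqnorm_nonneg' _)
      have hrle : rho ≤ sqnorm (A.mulVec h) / sqnorm h := csInf_le hbdd hmem
      have hsq0 : 0 < sqnorm h := by
        obtain ⟨i, hi⟩ := Function.ne_iff.mp hh0
        exact Finset.sum_pos' (fun j _ => sq_nonneg _)
          ⟨i, Finset.mem_univ i, by rw [← sq_abs]; exact pow_pos (abs_pos.mpr hi) 2⟩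
      have hl2pos : 0 < l2 h := Real.sqrt_pos.mpr hsq0
      have hsqeq : sqnorm h = (l2 h) ^ 2 := (Real.sq_sqrt hsq0.le).symm
      have h5 : rho * sqnorm h ≤ sqnorm (A.mulVec h) := by
        rw [le_div_iff₀ hsq0] at hrle
        linarith
      have h6 : rho * (l2 h) ^ 2 ≤ 2 * lam * (Real.sqrt (S.card : ℝ) * l2 h) := by
        have := mul_le_mul_of_nonneg_left hcs (by positivity : (0:ℝ) ≤ 2 * lam)
        rw [← hsqeq]
        linarith
      rw [le_div_iff₀ hrho]
      nlinarith [h6, hl2pos]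
  -- Part (iii)
  refine ⟨hi1, hl2b, ?_⟩
  have hid : A.mulVec xbar - b = A.mulVec x - b - A.mulVec h := by
    rw [hh, Matrix.mulVec_sub]; abel
  have hgd : dot (grad A b x) h = dot (A.mulVec x - b) (A.mulVec h) := by
    rw [grad, dot_transpose]
  have e1 : fls A b xbar = (sqnorm (A.mulVec x - b)
      - 2 * dot (A.mulVec x - b) (A.mulVec h) + sqnorm (A.mulVec h)) / 2 := by
    rw [fls, hid, sqnorm_sub']
  have hfx : fls A b x - fls A b xbar ≤ dot (grad A b x) h := by
    rw [fls, e1, hgd]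
    linarith [sqnorm_nonneg' (A.mulVec h)]
  have hl1x : l1 x - l1 xbar ≤ dot ξ h := by
    rw [l1, l1, dot, ← Finset.sum_sub_distrib]
    refine Finset.sum_le_sum fun i _ => ?_
    have hb2 : ξ i * xbar i ≤ |xbar i| := by
      calc ξ i * xbar i ≤ |ξ i * xbar i| := le_abs_self _
        _ = |ξ i| * |xbar i| := abs_mul _ _
        _ ≤ 1 * |xbar i| := mul_le_mul_of_nonneg_right (hxi1 i) (abs_nonneg _)
        _ = |xbar i| := one_mul _
    have hexp : ξ i * h i = |x i| - ξ i * xbar i := by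
      have : h i = x i - xbar i := by simp [hh]
      rw [this, mul_sub, hxix i]
    linarith [hexp ▸ le_refl (ξ i * h i)]
  have hphi2 : phi A b lam x - phi A b lam xbar
      ≤ dot (fun i => grad A b x i + lam * ξ i) h := by
    rw [phi, phi, hdotv]
    have := mul_le_mul_of_nonneg_left hl1x hlam.le
    nlinarith [hfx]
  have c1 : dp * lam * (l1on S h + l1on Sᶜ h)
      ≤ dp * lam * ((1 + gam) * l1on S h) := by nlinarith [mul_pos hdp0 hlam]
  have c2 : (1 + gam) * l1on S h ≤ (1 + gam) * (Real.sqrt (S.card : ℝ) * l2 h) :=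
    mul_le_mul_of_nonneg_left hcs (by linarith)
  have c3 : Real.sqrt (S.card : ℝ) * l2 h
      ≤ Real.sqrt (S.card : ℝ) * (2 * lam * Real.sqrt (S.card : ℝ) / rho) :=
    mul_le_mul_of_nonneg_left hl2b (Real.sqrt_nonneg _)
  have c4 : dp * lam * ((1 + gam) * (Real.sqrt (S.card : ℝ) *
      (2 * lam * Real.sqrt (S.card : ℝ) / rho)))
      = 2 * dp * (1 + gam) * lam ^ 2 * ((S.card : ℝ)) / rho := by
    rw [show Real.sqrt (S.card : ℝ) * (2 * lam * Real.sqrt (S.card : ℝ) / rho)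
        = 2 * lam * (Real.sqrt (S.card : ℝ) * Real.sqrt (S.card : ℝ)) / rho from by ring,
      Real.mul_self_sqrt (Nat.cast_nonneg _)]
    ring
  have hdplam : (0:ℝ) ≤ dp * lam := by positivity
  have hgam1 : (0:ℝ) ≤ 1 + gam := by linarith
  calc phi A b lam x ≤ phi A b lam xbar
        + dp * lam * (l1on S h + l1on Sᶜ h) := by linarith
    _ ≤ phi A b lam xbar + dp * lam * ((1 + gam) * l1on S h) := by linarith
    _ ≤ phi A b lam xbar + dp * lam * ((1 + gam) * (Real.sqrt (S.card : ℝ) * l2 h)) := by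
        have := mul_le_mul_of_nonneg_left c2 hdplam
        linarith
    _ ≤ phi A b lam xbar + dp * lam * ((1 + gam) * (Real.sqrt (S.card : ℝ) *
          (2 * lam * Real.sqrt (S.card : ℝ) / rho))) := by
        have := mul_le_mul_of_nonneg_left (mul_le_mul_of_nonneg_left c3 hgam1) hdplam
        linarith
    _ = phi A b lam xbar + 2 * dp * (1 + gam) * lam ^ 2 * ((S.card : ℝ)) / rho := by
        rw [c4]


end PGH
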